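/- arXiv:1712.08954 — 2 statements merged into one kernel-verified Lean document; each statement's English description precedes it below -/
import Mathlib

section
/- Every ε-PCE respects player compatibility in the following sense: if σ° is an ε-equilibrium for a player-compatible tremble profile ε and s_i* ≿ s_j*, then σ°_i(s_i*) ≥ min( σ°_j(s_j*), 1 − Σ_{s_i' ≠ s_i*} ε(s_i' | i) ). -/
open scoped Classical

noncomputable section

variable {ι : Type} [Fintype ι] [DecidableEq ι] {S : ι → Type} [∀ i, Fintype (S i)]

/-- A full-support correlated strategy profile on `S = ∏ i, S i`. -/
def FullSupport (σ : (∀ i, S i) → ℝ) : Prop :=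
  (∀ s, 0 < σ s) ∧ ∑ s, σ s = 1

/-- Expected payoff to player `i` from playing `si` against the correlated profile `σ`. -/
def expPay (U : ι → (∀ j, S j) → ℝ) (i : ι) (si : S i) (σ : (∀ j, S j) → ℝ) : ℝ :=
  ∑ s, σ s * U i (Function.update s i si)

/-- `σ` and `τ` have the same marginal on the strategies of players other than `i` and `j`. -/
def SameMarginal (i j : ι) (σ τ : (∀ k, S k) → ℝ) : Prop :=
  ∀ s : ∀ k, S k,
    (∑ si : S i, ∑ sj : S j, σ (Function.update (Function.update s i si) j sj)) =
    (∑ si : S i, ∑ sj : S j, τ (Function.update (Function.update s i si) j sj))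

/-- Player `i` is more compatible with `si` than player `j` is with `sj`. -/
def MoreCompatible (U : ι → (∀ j, S j) → ℝ) (i j : ι) (si : S i) (sj : S j) : Prop :=
  ∀ σ : (∀ k, S k) → ℝ, FullSupport σ →
    (∀ sj' : S j, expPay U j sj' σ ≤ expPay U j sj σ) →
    ∀ τ : (∀ k, S k) → ℝ, FullSupport τ → SameMarginal i j σ τ →
      ∀ si' : S i, si' ≠ si → expPay U i si' τ < expPay U i si τ

/-- Expected payoff to `i` under an independent mixed strategy profile `μ`. -/
def profPay (U : ι → (∀ j, S j) → ℝ) (i : ι) (μ : ∀ j, S j → ℝ) : ℝ :=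
  ∑ s : ∀ j, S j, (∏ j, μ j (s j)) * U i s

/-- `μi` is an `ε`-strategy for player `i`: a mixed strategy putting at least `ε i si`
on each pure strategy `si`. -/
def InTrembleSet (ε : ∀ i, S i → ℝ) (i : ι) (μi : S i → ℝ) : Prop :=
  (∑ si, μi si = 1) ∧ ∀ si, ε i si ≤ μi si

/-- `μ` is an `ε`-equilibrium: each player's strategy maximizes her payoff over `ε`-strategies. -/
def IsEpsEquilibrium (U : ι → (∀ j, S j) → ℝ) (ε : ∀ i, S i → ℝ) (μ : ∀ i, S i → ℝ) : Prop :=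
  (∀ i, InTrembleSet ε i (μ i)) ∧
  ∀ (i : ι) (τi : S i → ℝ), InTrembleSet ε i τi →
    profPay U i (Function.update μ i τi) ≤ profPay U i μ

/-- A player-compatible tremble profile: positive trembles whose magnitudes respect
the compatibility relation. -/
def PlayerCompatibleTremble (U : ι → (∀ j, S j) → ℝ) (ε : ∀ i, S i → ℝ) : Prop :=
  (∀ i si, 0 < ε i si) ∧
  ∀ (i j : ι) (si : S i) (sj : S j), i ≠ j → MoreCompatible U i j si sj → ε j sj ≤ ε i si

/-- `σstar` is a player-compatible equilibrium: a limit of `ε⁽ᵗ⁾`-equilibria along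
player-compatible tremble profiles `ε⁽ᵗ⁾ → 0`. -/
def IsPCE (U : ι → (∀ j, S j) → ℝ) (σstar : ∀ i, S i → ℝ) : Prop :=
  ∃ (ε : ℕ → ∀ i, S i → ℝ) (σ : ℕ → ∀ i, S i → ℝ),
    (∀ t, PlayerCompatibleTremble U (ε t)) ∧
    (∀ i si, Filter.Tendsto (fun t => ε t i si) Filter.atTop (nhds 0)) ∧
    (∀ t, IsEpsEquilibrium U (ε t) (σ t)) ∧
    (∀ i si, Filter.Tendsto (fun t => σ t i si) Filter.atTop (nhds (σstar i si)))


section AuxPCE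

/-- Product over all players other than `i`. -/
def Pother (i : ι) (μ : ∀ k, S k → ℝ) (s : ∀ k, S k) : ℝ :=
  ∏ k ∈ Finset.univ.erase i, μ k (s k)

lemma Pother_update (i : ι) (μ : ∀ k, S k → ℝ) (s : ∀ k, S k) (x : S i) :
    Pother i μ (Function.update s i x) = Pother i μ s := by
  unfold Pother
  refine Finset.prod_congr rfl fun k hk => ?_
  rw [Function.update_of_ne (Finset.ne_of_mem_erase hk)]

lemma prod_eq_self_mul_Pother (i : ι) (μ : ∀ k, S k → ℝ) (s : ∀ k, S k) :
    (∏ k, μ k (s k)) = μ i (s i) * Pother i μ s :=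
  (Finset.mul_prod_erase Finset.univ (fun k => μ k (s k)) (Finset.mem_univ i)).symm

/-- Sum over the fiber `{s : s i = a}` of the payoff to `i` when deviating to `b`. -/
def Qf (U : ι → (∀ j, S j) → ℝ) (i : ι) (μ : ∀ k, S k → ℝ) (a b : S i) : ℝ :=
  ∑ s ∈ Finset.univ.filter (fun s : ∀ k, S k => s i = a),
    Pother i μ s * U i (Function.update s i b)

lemma Qf_eq (U : ι → (∀ j, S j) → ℝ) (i : ι) (μ : ∀ k, S k → ℝ) (a b : S i) :
    Qf U i μ a b = Qf U i μ b b := by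
  classical
  unfold Qf
  refine Finset.sum_nbij' (fun s => Function.update s i b) (fun s => Function.update s i a)
    ?_ ?_ ?_ ?_ ?_
  · intro s hs; simp
  · intro s hs; simp
  · intro s hs
    simp only [Finset.mem_filter, Finset.mem_univ, true_and] at hs
    funext k
    by_cases hk : k = i
    · subst hk; simp [hs]
    · simp [Function.update_of_ne hk]
  · intro s hs
    simp only [Finset.mem_filter, Finset.mem_univ, true_and] at hs
    funext k
    by_cases hk : k = i
    · subst hk; simp [hs]
    · simp [Function.update_of_ne hk]
  · intro s hs
    rw [Pother_update, Function.update_idem]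

lemma expPay_prod (U : ι → (∀ j, S j) → ℝ) (i : ι) (μ : ∀ k, S k → ℝ)
    (hsum : ∑ si, μ i si = 1) (b : S i) :
    expPay U i b (fun s => ∏ k, μ k (s k)) = Qf U i μ b b := by
  classical
  unfold expPay
  have h1 : ∀ s : ∀ k, S k, (∏ k, μ k (s k)) * U i (Function.update s i b)
      = μ i (s i) * (Pother i μ s * U i (Function.update s i b)) := by
    intro s; rw [prod_eq_self_mul_Pother i μ s]; ring
  rw [Finset.sum_congr rfl fun s _ => h1 s]
  rw [← Finset.sum_fiberwise Finset.univ (fun s : ∀ k, S k => s i)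
    (fun s => μ i (s i) * (Pother i μ s * U i (Function.update s i b)))]
  have h2 : ∀ a : S i, ∑ s ∈ Finset.univ.filter (fun s : ∀ k, S k => s i = a),
      μ i (s i) * (Pother i μ s * U i (Function.update s i b)) = μ i a * Qf U i μ a b := by
    intro a
    rw [Qf, Finset.mul_sum]
    refine Finset.sum_congr rfl fun s hs => ?_
    simp only [Finset.mem_filter, Finset.mem_univ, true_and] at hs
    rw [hs]
  rw [Finset.sum_congr rfl fun a _ => h2 a]
  have h3 : ∀ a : S i, μ i a * Qf U i μ a b = μ i a * Qf U i μ b b := by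
    intro a; rw [Qf_eq]
  rw [Finset.sum_congr rfl fun a _ => h3 a, ← Finset.sum_mul, hsum, one_mul]

/-- Key decomposition: the payoff from a unilateral deviation is the `τi`-weighted
average of the pure-deviation payoffs against the product profile. -/
lemma profPay_update (U : ι → (∀ j, S j) → ℝ) (i : ι) (μ : ∀ k, S k → ℝ)
    (hsum : ∑ si, μ i si = 1) (τi : S i → ℝ) :
    profPay U i (Function.update μ i τi)
      = ∑ a, τi a * expPay U i a (fun s => ∏ k, μ k (s k)) := by
  classical
  unfold profPay
  have h1 : ∀ s : ∀ k, S k, (∏ k, Function.update μ i τi k (s k)) * U i s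
      = τi (s i) * (Pother i μ s * U i s) := by
    intro s
    rw [prod_eq_self_mul_Pother i (Function.update μ i τi) s]
    have : Pother i (Function.update μ i τi) s = Pother i μ s := by
      unfold Pother
      refine Finset.prod_congr rfl fun k hk => ?_
      rw [Function.update_of_ne (Finset.ne_of_mem_erase hk)]
    rw [this, Function.update_self]; ring
  rw [Finset.sum_congr rfl fun s _ => h1 s]
  rw [← Finset.sum_fiberwise Finset.univ (fun s : ∀ k, S k => s i)
    (fun s => τi (s i) * (Pother i μ s * U i s))]
  refine Finset.sum_congr rfl fun a _ => ?_
  rw [expPay_prod U i μ hsum a, Qf, Finset.mul_sum]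
  refine Finset.sum_congr rfl fun s hs => ?_
  simp only [Finset.mem_filter, Finset.mem_univ, true_and] at hs
  rw [hs, show Function.update s i a = s from by rw [← hs]; exact Function.update_eq_self i s]

/-- In an `ε`-equilibrium, a strategy that is strictly worse than some other strategy
is played with minimal probability. -/
lemma not_strict_better (U : ι → (∀ j, S j) → ℝ) (ε : ∀ k, S k → ℝ) (μ : ∀ k, S k → ℝ)
    (heq : IsEpsEquilibrium U ε μ)
    (k : ι) (a b : S k)
    (hV : expPay U k b (fun s => ∏ m, μ m (s m)) < expPay U k a (fun s => ∏ m, μ m (s m))) :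
    μ k b ≤ ε k b := by
  classical
  obtain ⟨htrem, hopt⟩ := heq
  by_contra hgt
  push_neg at hgt
  set V : S k → ℝ := fun x => expPay U k x (fun s => ∏ m, μ m (s m)) with hVdef
  set δ : ℝ := μ k b - ε k b with hδ
  have hδpos : 0 < δ := by simp only [hδ]; linarith
  have hab : a ≠ b := by rintro rfl; exact lt_irrefl _ hV
  set τ : S k → ℝ := fun x => μ k x + (if x = a then δ else 0) - (if x = b then δ else 0)
    with hτ
  have hτsum : ∑ x, τ x = 1 := by
    simp only [hτ, Finset.sum_sub_distrib, Finset.sum_add_distrib, (htrem k).1]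
    simp
  have hτtrem : InTrembleSet ε k τ := by
    refine ⟨hτsum, fun x => ?_⟩
    by_cases hxb : x = b
    · rw [hxb]
      have hba : ¬ b = a := fun h => hab h.symm
      have hτb : τ b = ε k b := by
        simp only [hτ, if_neg hba, if_pos rfl, eq_self_iff_true, if_true, add_zero]
        rw [hδ]; ring
      rw [hτb]
    · have hμ := (htrem k).2 x
      simp only [hτ, if_neg hxb]
      split_ifs with hxa <;> linarith
  have hterm : ∀ x, τ x * V x
      = μ k x * V x + (if x = a then δ * V x else 0) - (if x = b then δ * V x else 0) := by
    intro x
    simp only [hτ]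
    split_ifs <;> ring
  have hdecomp1 : profPay U k (Function.update μ k τ) = ∑ x, τ x * V x :=
    profPay_update U k μ (htrem k).1 τ
  have hdecomp2 : profPay U k μ = ∑ x, μ k x * V x := by
    have h := profPay_update U k μ (htrem k).1 (μ k)
    rwa [Function.update_eq_self] at h
  have hsum2 : ∑ x, τ x * V x = (∑ x, μ k x * V x) + δ * V a - δ * V b := by
    rw [Finset.sum_congr rfl fun x _ => hterm x, Finset.sum_sub_distrib,
      Finset.sum_add_distrib]
    simp
  have hle := hopt k τ hτtrem
  rw [hdecomp1, hsum2, hdecomp2] at hle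
  have hVab : V b < V a := hV
  nlinarith

end AuxPCE

/-- Every `ε`-PCE respects player compatibility (Lemma in the Appendix):
if `σ°` is an `ε`-equilibrium for a player-compatible tremble profile `ε` and
`s_i* ≿ s_j*`, then `σ°ᵢ(s_i*) ≥ min(σ°ⱼ(s_j*), 1 − Σ_{s_i' ≠ s_i*} ε(s_i'|i))`. -/

theorem epsPCE_respects_compatibility
    (U : ι → (∀ j, S j) → ℝ) (ε : ∀ i, S i → ℝ) (μ : ∀ i, S i → ℝ)
    (hε : PlayerCompatibleTremble U ε)
    (heq : IsEpsEquilibrium U ε μ)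
    (i j : ι) (hij : i ≠ j) (sistar : S i) (sjstar : S j)
    (hcompat : MoreCompatible U i j sistar sjstar) :
    min (μ j sjstar) (1 - ∑ si' ∈ Finset.univ.erase sistar, ε i si') ≤ μ i sistar := by
  classical
  obtain ⟨htrem, hopt⟩ := heq
  obtain ⟨hpos, hcomp⟩ := hε
  set σ0 : (∀ k, S k) → ℝ := fun s => ∏ k, μ k (s k) with hσ0
  have hFS : FullSupport σ0 := by
    constructor
    · intro s
      exact Finset.prod_pos fun k _ => lt_of_lt_of_le (hpos k (s k)) ((htrem k).2 (s k))
    · have h := (Fintype.prod_sum (fun k (x : S k) => μ k x)).symm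
      simp only [hσ0]
      rw [h, Finset.prod_eq_one fun k _ => (htrem k).1]
  rcases le_or_gt (1 - ∑ si' ∈ Finset.univ.erase sistar, ε i si') (μ i sistar) with hcap | hcap
  · exact le_trans (min_le_right _ _) hcap
  · have hstep : ∃ si'' : S i, si'' ≠ sistar ∧ expPay U i sistar σ0 ≤ expPay U i si'' σ0 := by
      by_contra h
      push_neg at h
      have hmin : ∀ si' ∈ Finset.univ.erase sistar, μ i si' ≤ ε i si' := fun si' hsi' =>
        not_strict_better U ε μ ⟨htrem, hopt⟩ i sistar si'
          (h si' (Finset.ne_of_mem_erase hsi'))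
      have hsum1 : μ i sistar + ∑ si' ∈ Finset.univ.erase sistar, μ i si' = 1 := by
        rw [Finset.add_sum_erase Finset.univ (μ i) (Finset.mem_univ sistar)]
        exact (htrem i).1
      have hsum2 : ∑ si' ∈ Finset.univ.erase sistar, μ i si'
          ≤ ∑ si' ∈ Finset.univ.erase sistar, ε i si' := Finset.sum_le_sum hmin
      linarith
    obtain ⟨si'', hne, hge⟩ := hstep
    have hnotBR : ∃ sj' : S j, expPay U j sjstar σ0 < expPay U j sj' σ0 := by
      by_contra h
      push_neg at h
      have := hcompat σ0 hFS h σ0 hFS (fun s => rfl) si'' hne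
      exact absurd hge (not_le.2 this)
    obtain ⟨sj', hj'⟩ := hnotBR
    have hmuj : μ j sjstar ≤ ε j sjstar :=
      not_strict_better U ε μ ⟨htrem, hopt⟩ j sj' sjstar hj'
    calc min (μ j sjstar) (1 - ∑ si' ∈ Finset.univ.erase sistar, ε i si')
        ≤ μ j sjstar := min_le_left _ _
      _ ≤ ε j sjstar := hmuj
      _ ≤ ε i sistar := hcomp i j sistar sjstar hij hcompat
      _ ≤ μ i sistar := (htrem i).2 sistar


end
end

section
/- In a signaling game, every PCE is a Nash equilibrium satisfying the compatibility criterion: for every PCE σ* and every receiver pure plan assigned positive probability under σ*_2, and every signal s, the action the plan prescribes after s best responds to some belief p ∈ Δ(Θ) over sender types satisfying p(θ)/p(θ') ≥ λ(θ)/λ(θ') whenever sending s as type θ is more compatible than as type θ'. -/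
open scoped Classical

noncomputable section

section GenericGame

variable {ι : Type} [Fintype ι] [DecidableEq ι] {S : ι → Type} [∀ i, Fintype (S i)]

/-- Mixed Nash equilibrium. -/
def IsNash (U : ι → (∀ j, S j) → ℝ) (μ : ∀ i, S i → ℝ) : Prop :=
  (∀ i, (∀ si, 0 ≤ μ i si) ∧ ∑ si, μ i si = 1) ∧
  ∀ (i : ι) (τi : S i → ℝ), (∀ si, 0 ≤ τi si) → (∑ si, τi si = 1) →
    profPay U i (Function.update μ i τi) ≤ profPay U i μ


set_option linter.unusedSectionVars false

section PCEAuxGeneric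
variable {ι : Type} [Fintype ι] [DecidableEq ι] {S : ι → Type} [∀ i, Fintype (S i)]

def prodMix (μ : ∀ j, S j → ℝ) : (∀ j, S j) → ℝ := fun s => ∏ j, μ j (s j)

lemma sum_prodMix_mul (μ : ∀ j, S j → ℝ) (hμ : ∀ j, ∑ x, μ j x = 1)
    (k : ι) (g : S k → ℝ) :
    ∑ s : ∀ j, S j, prodMix μ s * g (s k) = ∑ x, μ k x * g x := by
  classical
  set ν : ∀ j, S j → ℝ := Function.update μ k (fun x => μ k x * g x) with hν
  have h1 : ∀ s : ∀ j, S j, prodMix μ s * g (s k) = ∏ j, ν j (s j) := by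
    intro s
    rw [prodMix, ← Finset.mul_prod_erase Finset.univ (fun j => μ j (s j)) (Finset.mem_univ k),
        ← Finset.mul_prod_erase Finset.univ (fun j => ν j (s j)) (Finset.mem_univ k)]
    have : ∀ j ∈ Finset.univ.erase k, ν j (s j) = μ j (s j) := by
      intro j hj
      rw [hν, Function.update_of_ne (Finset.mem_erase.1 hj).1]
    rw [Finset.prod_congr rfl this, hν, Function.update_self]
    ring
  rw [Finset.sum_congr rfl (fun s _ => h1 s), ← Fintype.prod_sum ν,
      ← Finset.mul_prod_erase Finset.univ (fun j => ∑ x, ν j x) (Finset.mem_univ k)]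
  have h2 : ∀ j ∈ Finset.univ.erase k, (∑ x, ν j x) = 1 := by
    intro j hj
    rw [hν]; rw [show (Function.update μ k (fun x => μ k x * g x)) j = μ j from
      Function.update_of_ne (Finset.mem_erase.1 hj).1 _ _]
    exact hμ j
  rw [Finset.prod_congr rfl h2, Finset.prod_const_one, mul_one, hν, Function.update_self]

lemma sum_pi_eq (i : ι) (f : (∀ j, S j) → ℝ) :
    ∑ s, f s = ∑ x : S i, ∑ r : ∀ j : {j // j ≠ i}, S j,
      f ((Equiv.piSplitAt i S).symm (x, r)) := by
  rw [← Equiv.sum_comp (Equiv.piSplitAt i S).symm f, Fintype.sum_prod_type]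

lemma splitAt_apply_self (i : ι) (x : S i) (r : ∀ j : {j // j ≠ i}, S j) :
    ((Equiv.piSplitAt i S).symm (x, r)) i = x := by simp

lemma splitAt_apply_ne (i : ι) (x : S i) (r : ∀ j : {j // j ≠ i}, S j) (j : ι) (h : j ≠ i) :
    ((Equiv.piSplitAt i S).symm (x, r)) j = r ⟨j, h⟩ := by simp [h]

lemma update_splitAt (i : ι) (x y : S i) (r : ∀ j : {j // j ≠ i}, S j) :
    Function.update ((Equiv.piSplitAt i S).symm (x, r)) i y
      = (Equiv.piSplitAt i S).symm (y, r) := by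
  funext j
  by_cases h : j = i
  · subst h; simp
  · rw [Function.update_of_ne h, splitAt_apply_ne i x r j h, splitAt_apply_ne i y r j h]

lemma prod_split (i : ι) (ν : ∀ j, S j → ℝ) (x : S i) (r : ∀ j : {j // j ≠ i}, S j) :
    (∏ j, ν j (((Equiv.piSplitAt i S).symm (x, r)) j))
      = ν i x * ∏ j : {j // j ≠ i}, ν (j : ι) (r j) := by
  rw [← Finset.mul_prod_erase Finset.univ _ (Finset.mem_univ i), splitAt_apply_self]
  congr 1
  rw [Finset.prod_subtype (Finset.univ.erase i) (p := fun j => j ≠ i)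
      (fun j => by simp) (fun j => ν j (((Equiv.piSplitAt i S).symm (x, r)) j))]
  exact Finset.prod_congr rfl (fun j _ => by rw [splitAt_apply_ne i x r j j.2])

lemma expPay_prodMix (U : ι → (∀ j, S j) → ℝ) (i : ι) (x : S i) (μ : ∀ j, S j → ℝ)
    (hμi : ∑ y, μ i y = 1) :
    expPay U i x (prodMix μ) = ∑ r : ∀ j : {j // j ≠ i}, S j,
      (∏ j : {j // j ≠ i}, μ (j : ι) (r j)) * U i ((Equiv.piSplitAt i S).symm (x, r)) := by
  rw [expPay, sum_pi_eq i]
  have h : ∀ (y : S i) (r : ∀ j : {j // j ≠ i}, S j),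
      prodMix μ ((Equiv.piSplitAt i S).symm (y, r)) *
        U i (Function.update ((Equiv.piSplitAt i S).symm (y, r)) i x)
      = μ i y * ((∏ j : {j // j ≠ i}, μ (j : ι) (r j)) *
          U i ((Equiv.piSplitAt i S).symm (x, r))) := by
    intro y r
    rw [prodMix, prod_split, update_splitAt, mul_assoc]
  simp_rw [h, ← Finset.mul_sum, ← Finset.sum_mul, hμi, one_mul]

lemma profPay_update_s12 (U : ι → (∀ j, S j) → ℝ) (i : ι) (μ : ∀ j, S j → ℝ)
    (hμi : ∑ y, μ i y = 1) (τ : S i → ℝ) :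
    profPay U i (Function.update μ i τ) = ∑ x, τ x * expPay U i x (prodMix μ) := by
  rw [profPay, sum_pi_eq i]
  have h : ∀ (x : S i) (r : ∀ j : {j // j ≠ i}, S j),
      (∏ j, Function.update μ i τ j (((Equiv.piSplitAt i S).symm (x, r)) j)) *
        U i ((Equiv.piSplitAt i S).symm (x, r))
      = τ x * ((∏ j : {j // j ≠ i}, μ (j : ι) (r j)) *
          U i ((Equiv.piSplitAt i S).symm (x, r))) := by
    intro x r
    rw [prod_split, Function.update_self, mul_assoc]
    congr 2
    exact Finset.prod_congr rfl (fun j _ => by rw [Function.update_of_ne j.2])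
  simp_rw [h, ← Finset.mul_sum]
  exact Finset.sum_congr rfl (fun x _ => by rw [expPay_prodMix U i x μ hμi])

lemma profPay_eq_sum (U : ι → (∀ j, S j) → ℝ) (i : ι) (μ : ∀ j, S j → ℝ)
    (hμi : ∑ y, μ i y = 1) :
    profPay U i μ = ∑ x, μ i x * expPay U i x (prodMix μ) := by
  conv_lhs => rw [← Function.update_eq_self i μ]
  exact profPay_update_s12 U i μ hμi (μ i)

lemma upd2_self (i j : ι) (hij : i ≠ j) (s : ∀ k, S k) (x : S i) (y : S j) :
    Function.update (Function.update
        (Function.update (Function.update s i x) j y) i (s i)) j (s j) = s := by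
  funext k
  by_cases hk : k = j
  · subst hk; rw [Function.update_self]
  · rw [Function.update_of_ne hk]
    by_cases hk' : k = i
    · subst hk'; rw [Function.update_self]
    · rw [Function.update_of_ne hk', Function.update_of_ne hk, Function.update_of_ne hk']

lemma upd2_fst (i j : ι) (hij : i ≠ j) (s : ∀ k, S k) (x : S i) (y : S j) :
    (Function.update (Function.update s i x) j y) i = x := by
  rw [Function.update_of_ne hij, Function.update_self]

lemma upd2_snd (i j : ι) (s : ∀ k, S k) (x : S i) (y : S j) :
    (Function.update (Function.update s i x) j y) j = y := Function.update_self _ _ _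

/-- The swap equivalence used to count fibers of the double-update map. -/
def updEquiv (i j : ι) (hij : i ≠ j) :
    ((∀ k, S k) × (S i × S j)) ≃ ((∀ k, S k) × (S i × S j)) where
  toFun p := ⟨Function.update (Function.update p.1 i p.2.1) j p.2.2, p.1 i, p.1 j⟩
  invFun p := ⟨Function.update (Function.update p.1 i p.2.1) j p.2.2, p.1 i, p.1 j⟩
  left_inv p := by
    obtain ⟨s, x, y⟩ := p
    simp only
    rw [upd2_self i j hij, upd2_fst i j hij, upd2_snd]
  right_inv p := by
    obtain ⟨s, x, y⟩ := p
    simp only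
    rw [upd2_self i j hij, upd2_fst i j hij, upd2_snd]

lemma sum_updEquiv (i j : ι) (hij : i ≠ j) (ρ F : (∀ k, S k) → ℝ)
    (hFi : ∀ s x, F (Function.update s i x) = F s)
    (hFj : ∀ s y, F (Function.update s j y) = F s) :
    ∑ s : ∀ k, S k, (∑ x : S i, ∑ y : S j,
        ρ (Function.update (Function.update s i x) j y)) * F s
      = (Fintype.card (S i) * Fintype.card (S j) : ℝ) * ∑ s, ρ s * F s := by
  have key := Equiv.sum_comp (updEquiv i j hij)
      (fun p : (∀ k, S k) × (S i × S j) => ρ p.1 * F p.1)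
  have h1 : ∀ p : (∀ k, S k) × (S i × S j),
      (fun p : (∀ k, S k) × (S i × S j) => ρ p.1 * F p.1) ((updEquiv i j hij) p)
        = ρ (Function.update (Function.update p.1 i p.2.1) j p.2.2) * F p.1 := by
    intro p; simp only [updEquiv, Equiv.coe_fn_mk]
    rw [hFj, hFi]
  calc ∑ s : ∀ k, S k, (∑ x : S i, ∑ y : S j,
        ρ (Function.update (Function.update s i x) j y)) * F s
      = ∑ p : (∀ k, S k) × (S i × S j),
          ρ (Function.update (Function.update p.1 i p.2.1) j p.2.2) * F p.1 := by
        rw [Fintype.sum_prod_type]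
        refine Finset.sum_congr rfl (fun s _ => ?_)
        rw [Finset.sum_mul, Fintype.sum_prod_type]
        exact Finset.sum_congr rfl (fun x _ => by rw [Finset.sum_mul])
    _ = ∑ p : (∀ k, S k) × (S i × S j), ρ p.1 * F p.1 := by
        rw [← key]; exact Finset.sum_congr rfl (fun p _ => (h1 p).symm)
    _ = (Fintype.card (S i) * Fintype.card (S j) : ℝ) * ∑ s, ρ s * F s := by
        rw [Fintype.sum_prod_type]
        simp only [Finset.sum_const, Finset.card_univ, Fintype.card_prod, nsmul_eq_mul,
          Nat.cast_mul]
        rw [Finset.mul_sum]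

lemma sameMarginal_sum_eq (i j : ι) (hij : i ≠ j) [Nonempty (S i)] [Nonempty (S j)]
    (σ τ : (∀ k, S k) → ℝ) (hm : SameMarginal i j σ τ) (F : (∀ k, S k) → ℝ)
    (hFi : ∀ s x, F (Function.update s i x) = F s)
    (hFj : ∀ s y, F (Function.update s j y) = F s) :
    ∑ s, σ s * F s = ∑ s, τ s * F s := by
  have hc : (0 : ℝ) < (Fintype.card (S i) * Fintype.card (S j) : ℝ) :=
    mul_pos (by exact_mod_cast Fintype.card_pos) (by exact_mod_cast Fintype.card_pos)
  have h1 := sum_updEquiv i j hij σ F hFi hFj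
  have h2 := sum_updEquiv i j hij τ F hFi hFj
  have h3 : ∑ s : ∀ k, S k, (∑ x : S i, ∑ y : S j,
        σ (Function.update (Function.update s i x) j y)) * F s
      = ∑ s : ∀ k, S k, (∑ x : S i, ∑ y : S j,
        τ (Function.update (Function.update s i x) j y)) * F s :=
    Finset.sum_congr rfl (fun s _ => by rw [hm s])
  exact mul_left_cancel₀ (ne_of_gt hc) (h1.symm.trans (h3.trans h2))

lemma eps_best (U : ι → (∀ j, S j) → ℝ) (ε : ∀ i, S i → ℝ) (μ : ∀ i, S i → ℝ)
    (h : IsEpsEquilibrium U ε μ) {i : ι} {si : S i} (hlt : ε i si < μ i si)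
    (si' : S i) : expPay U i si' (prodMix μ) ≤ expPay U i si (prodMix μ) := by
  by_contra hgt
  push_neg at hgt
  have hsum : ∑ x, μ i x = 1 := (h.1 i).1
  have hδpos : 0 < μ i si - ε i si := by linarith
  have hsi' : si' ≠ si := by rintro rfl; exact lt_irrefl _ hgt
  set δ := μ i si - ε i si with hδ
  set τ : S i → ℝ :=
    fun x => μ i x + (if x = si' then δ else 0) - (if x = si then δ else 0) with hτ
  have htrem : InTrembleSet ε i τ := by
    constructor
    · rw [hτ]
      rw [Finset.sum_sub_distrib, Finset.sum_add_distrib,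
          Finset.sum_ite_eq' Finset.univ si' (fun _ => δ),
          Finset.sum_ite_eq' Finset.univ si (fun _ => δ)]
      simp [hsum]
    · intro x
      rw [hτ]
      simp only
      by_cases h1 : x = si
      · subst h1
        rw [if_neg (fun he => hsi' he.symm), if_pos rfl]
        simp only [hδ]
        linarith
      · rw [if_neg h1]
        have h3 := (h.1 i).2 x
        by_cases h2 : x = si'
        · rw [if_pos h2]; linarith
        · rw [if_neg h2]; linarith
  have key := h.2 i τ htrem
  rw [profPay_update_s12 U i μ hsum τ, profPay_eq_sum U i μ hsum] at key
  have hexp : ∀ x, τ x * expPay U i x (prodMix μ)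
      = μ i x * expPay U i x (prodMix μ)
        + (if x = si' then δ * expPay U i x (prodMix μ) else 0)
        - (if x = si then δ * expPay U i x (prodMix μ) else 0) := by
    intro x; rw [hτ]; simp only; split_ifs <;> ring
  rw [Finset.sum_congr rfl (fun x _ => hexp x), Finset.sum_sub_distrib,
      Finset.sum_add_distrib,
      Finset.sum_ite_eq' Finset.univ si' (fun x => δ * expPay U i x (prodMix μ)),
      Finset.sum_ite_eq' Finset.univ si (fun x => δ * expPay U i x (prodMix μ))] at key
  simp only [Finset.mem_univ, if_true] at key
  nlinarith [key, hgt, hδpos]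

lemma eps_min (U : ι → (∀ j, S j) → ℝ) (ε : ∀ i, S i → ℝ) (μ : ∀ i, S i → ℝ)
    (h : IsEpsEquilibrium U ε μ) {i : ι} {si si' : S i}
    (hgt : expPay U i si (prodMix μ) < expPay U i si' (prodMix μ)) : μ i si = ε i si := by
  by_contra hne
  exact absurd (eps_best U ε μ h (lt_of_le_of_ne ((h.1 i).2 si) (Ne.symm hne)) si')
    (not_le.2 hgt)

lemma tendsto_profPay (U : ι → (∀ j, S j) → ℝ) (i : ι) (ν : ℕ → ∀ j, S j → ℝ)
    (ν' : ∀ j, S j → ℝ)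
    (hν : ∀ j x, Filter.Tendsto (fun t => ν t j x) Filter.atTop (nhds (ν' j x))) :
    Filter.Tendsto (fun t => profPay U i (ν t)) Filter.atTop (nhds (profPay U i ν')) := by
  unfold profPay
  exact tendsto_finset_sum _ (fun s _ =>
    (tendsto_finset_prod _ (fun j _ => hν j (s j))).mul_const (U i s))

end PCEAuxGeneric

end GenericGame

section Signaling

variable {Θ Sig Act : Type} [Fintype Θ] [Fintype Sig] [Fintype Act]
  [DecidableEq Θ] [DecidableEq Sig] [DecidableEq Act]

/-- Agent-form strategy sets of the signaling game: each sender type chooses a signal;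
the receiver (player `none`) chooses a signal-contingent plan. -/
def SigStrat (Θ Sig Act : Type) : Option Θ → Type
  | some _ => Sig
  | none => Sig → Act

instance : ∀ p : Option Θ, Fintype (SigStrat Θ Sig Act p)
  | some _ => inferInstanceAs (Fintype Sig)
  | none => inferInstanceAs (Fintype (Sig → Act))

/-- Agent-form utilities of the signaling game: each sender type is a separate player,
the receiver's payoff averages over types with the prior `lam`. -/
def sigU (u1 u2 : Sig → Act → Θ → ℝ) (lam : Θ → ℝ) :
    (p : Option Θ) → (∀ q : Option Θ, SigStrat Θ Sig Act q) → ℝ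
  | some θ, prof => u1 (prof (some θ)) (prof none (prof (some θ))) θ
  | none, prof => ∑ θ, lam θ * u2 (prof (some θ)) (prof none (prof (some θ))) θ

/-- Sender's expected payoff from signal `s` against a behavioral receiver strategy. -/
def behPay (u1 : Sig → Act → Θ → ℝ) (s : Sig) (σ2 : Sig → Act → ℝ) (θ : Θ) : ℝ :=
  ∑ a, σ2 s a * u1 s a θ

/-- `sstar` is more type-compatible with `θ` than with `θ'`. -/
def TypeCompat (u1 : Sig → Act → Θ → ℝ) (sstar : Sig) (θ θ' : Θ) : Prop :=
  ∀ σ2 : Sig → Act → ℝ, (∀ s a, 0 < σ2 s a) → (∀ s, ∑ a, σ2 s a = 1) →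
    (∀ s' : Sig, s' ≠ sstar → behPay u1 s' σ2 θ' ≤ behPay u1 sstar σ2 θ') →
    (∀ s' : Sig, s' ≠ sstar → behPay u1 s' σ2 θ < behPay u1 sstar σ2 θ)


section PCEAuxSig
variable {Θ Sig Act : Type} [Fintype Θ] [Fintype Sig] [Fintype Act]
  [DecidableEq Θ] [DecidableEq Sig] [DecidableEq Act]

/-- A canonical pure profile in the signaling game. -/
def constProf (x : Sig) (f : Sig → Act) : ∀ q : Option Θ, SigStrat Θ Sig Act q
  | some _ => x
  | none => f

lemma sender_sigU (u1 u2 : Sig → Act → Θ → ℝ) (lam : Θ → ℝ) (θ : Θ) (s' : Sig)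
    (prof : ∀ q : Option Θ, SigStrat Θ Sig Act q) :
    sigU u1 u2 lam (some θ) (Function.update prof (some θ) s')
      = u1 s' ((prof none : Sig → Act) s') θ := by
  show u1 ((Function.update prof (some θ) s') (some θ))
      (((Function.update prof (some θ) s') none : Sig → Act)
        ((Function.update prof (some θ) s') (some θ))) θ = _
  erw [Function.update_self,
      Function.update_of_ne (by simp : (none : Option Θ) ≠ some θ)]

lemma recv_sigU (u1 u2 : Sig → Act → Θ → ℝ) (lam : Θ → ℝ) (c : Sig → Act)
    (prof : ∀ q : Option Θ, SigStrat Θ Sig Act q) :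
    sigU u1 u2 lam none (Function.update prof none (c : SigStrat Θ Sig Act none))
      = ∑ θ, lam θ * u2 (prof (some θ)) (c (prof (some θ))) θ := by
  show (∑ θ, lam θ *
      u2 ((Function.update prof none (c : SigStrat Θ Sig Act none)) (some θ))
        (((Function.update prof none (c : SigStrat Θ Sig Act none)) none : Sig → Act)
          ((Function.update prof none (c : SigStrat Θ Sig Act none)) (some θ))) θ) = _
  refine Finset.sum_congr rfl (fun θ _ => ?_)
  erw [Function.update_self,
      Function.update_of_ne (by simp : (some θ : Option Θ) ≠ none)]

lemma regroupGen {β : Type} [Fintype β] (w : β → ℝ) (h : β → Act) (g : Act → ℝ) :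
    ∑ b, w b * g (h b) = ∑ a, (∑ b, if h b = a then w b else 0) * g a := by
  symm
  calc ∑ a, (∑ b, if h b = a then w b else 0) * g a
      = ∑ a, ∑ b, (if h b = a then w b * g a else 0) := by
        refine Finset.sum_congr rfl fun a _ => ?_
        rw [Finset.sum_mul]
        exact Finset.sum_congr rfl fun b _ => by rw [ite_mul, zero_mul]
    _ = ∑ b, ∑ a, (if h b = a then w b * g a else 0) := Finset.sum_comm
    _ = ∑ b, w b * g (h b) := by
        refine Finset.sum_congr rfl fun b _ => ?_
        rw [Finset.sum_ite_eq Finset.univ (h b) (fun a => w b * g a)]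
        simp

lemma expPay_sender_corr (u1 u2 : Sig → Act → Θ → ℝ) (lam : Θ → ℝ) (θ'' : Θ) (s' : Sig)
    (σ : (∀ q : Option Θ, SigStrat Θ Sig Act q) → ℝ) :
    expPay (sigU u1 u2 lam) (some θ'') s' σ
      = behPay u1 s'
          (fun x a => ∑ prof, if (prof none : Sig → Act) x = a then σ prof else 0) θ'' := by
  unfold expPay behPay
  simp only [sender_sigU]
  exact regroupGen σ (fun prof => (prof none : Sig → Act) s') (fun a => u1 s' a θ'')

lemma expPay_sender_prod (u1 u2 : Sig → Act → Θ → ℝ) (lam : Θ → ℝ) (θ'' : Θ) (s' : Sig)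
    (μ : ∀ q : Option Θ, SigStrat Θ Sig Act q → ℝ) (hμ : ∀ q, ∑ x, μ q x = 1) :
    expPay (sigU u1 u2 lam) (some θ'') s' (prodMix μ)
      = behPay u1 s'
          (fun x a => ∑ c : Sig → Act, if c x = a then μ none c else 0) θ'' := by
  unfold expPay behPay
  simp only [sender_sigU]
  trans (∑ c : Sig → Act, μ none c * u1 s' (c s') θ'')
  · exact sum_prodMix_mul μ hμ none
      (fun c : SigStrat Θ Sig Act none => u1 s' ((c : Sig → Act) s') θ'')
  · exact regroupGen (fun c : Sig → Act => μ none c) (fun c => c s') (fun a => u1 s' a θ'')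

lemma expPay_recv_prod (u1 u2 : Sig → Act → Θ → ℝ) (lam : Θ → ℝ) (c : Sig → Act)
    (μ : ∀ q : Option Θ, SigStrat Θ Sig Act q → ℝ) (hμ : ∀ q, ∑ x, μ q x = 1) :
    expPay (sigU u1 u2 lam) none (c : SigStrat Θ Sig Act none) (prodMix μ)
      = ∑ x : Sig, ∑ θ, lam θ * μ (some θ) x * u2 x (c x) θ := by
  unfold expPay
  simp only [recv_sigU u1 u2 lam c]
  trans (∑ prof : ∀ q : Option Θ, SigStrat Θ Sig Act q,
      ∑ θ, prodMix μ prof * (lam θ * u2 (prof (some θ)) (c (prof (some θ))) θ))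
  · refine Finset.sum_congr rfl fun prof _ => ?_
    rw [Finset.mul_sum]
  rw [Finset.sum_comm]
  trans (∑ θ, ∑ x : Sig, μ (some θ) x * (lam θ * u2 x (c x) θ))
  · refine Finset.sum_congr rfl fun θ _ => ?_
    exact sum_prodMix_mul μ hμ (some θ)
      (fun x : SigStrat Θ Sig Act (some θ) => lam θ * u2 (x : Sig) (c (x : Sig)) θ)
  rw [Finset.sum_comm]
  exact Finset.sum_congr rfl fun x _ => Finset.sum_congr rfl fun θ _ => by ring

lemma typeCompat_moreCompatible (u1 u2 : Sig → Act → Θ → ℝ) (lam : Θ → ℝ)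
    (s : Sig) (θ θ' : Θ) (hne : θ ≠ θ') (hTC : TypeCompat u1 s θ θ') :
    MoreCompatible (sigU u1 u2 lam) (some θ) (some θ') s s := by
  intro σ hσ hbest τ hτ hm si' hne'
  haveI : Nonempty (SigStrat Θ Sig Act (some θ)) := ⟨(s : Sig)⟩
  haveI : Nonempty (SigStrat Θ Sig Act (some θ')) := ⟨(s : Sig)⟩
  have hij : (some θ : Option Θ) ≠ some θ' := by simpa using hne
  have htransfer : ∀ x : Sig, expPay (sigU u1 u2 lam) (some θ) x τ
      = expPay (sigU u1 u2 lam) (some θ) x σ := by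
    intro x
    unfold expPay
    simp only [sender_sigU]
    exact (sameMarginal_sum_eq (some θ) (some θ') hij σ τ hm
      (fun prof => u1 x ((prof none : Sig → Act) x) θ)
      (fun prof y => by
        simp only [Function.update_of_ne (by simp : (none : Option Θ) ≠ some θ)])
      (fun prof y => by
        simp only [Function.update_of_ne (by simp : (none : Option Θ) ≠ some θ')])).symm
  set σ2 : Sig → Act → ℝ :=
    fun x a => ∑ prof, if (prof none : Sig → Act) x = a then σ prof else 0 with hσ2
  have hterm : ∀ (x : Sig) (a : Act) (prof : ∀ q : Option Θ, SigStrat Θ Sig Act q),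
      0 ≤ (if (prof none : Sig → Act) x = a then σ prof else 0) := by
    intro x a prof
    split_ifs
    · exact (hσ.1 prof).le
    · exact le_rfl
  have hσ2pos : ∀ x a, 0 < σ2 x a := by
    intro x a
    have hle := Finset.single_le_sum (fun prof _ => hterm x a prof)
      (Finset.mem_univ (constProf (Θ := Θ) x (fun _ => a)))
    rw [if_pos (show ((constProf (Θ := Θ) x (fun _ => a)) none : Sig → Act) x = a
      from rfl)] at hle
    exact lt_of_lt_of_le (hσ.1 _) hle
  have hσ2sum : ∀ x, ∑ a, σ2 x a = 1 := by
    intro x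
    rw [hσ2]
    simp only
    rw [Finset.sum_comm]
    trans (∑ prof : ∀ q : Option Θ, SigStrat Θ Sig Act q, σ prof)
    · refine Finset.sum_congr rfl fun prof _ => ?_
      rw [Finset.sum_ite_eq Finset.univ ((prof none : Sig → Act) x) (fun _ => σ prof)]
      simp
    · exact hσ.2
  have hb : ∀ s' : Sig, s' ≠ s → behPay u1 s' σ2 θ' ≤ behPay u1 s σ2 θ' := by
    intro s' _
    have h0 := hbest (s' : SigStrat Θ Sig Act (some θ'))
    rwa [expPay_sender_corr u1 u2 lam θ' s' σ, expPay_sender_corr u1 u2 lam θ' s σ] at h0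
  have hstrict := hTC σ2 hσ2pos hσ2sum hb si' hne'
  rw [htransfer si', htransfer s,
      expPay_sender_corr u1 u2 lam θ si' σ, expPay_sender_corr u1 u2 lam θ s σ]
  exact hstrict

lemma recv_best (u1 u2 : Sig → Act → Θ → ℝ) (lam : Θ → ℝ)
    (ε μ : ∀ q : Option Θ, SigStrat Θ Sig Act q → ℝ)
    (heq : IsEpsEquilibrium (sigU u1 u2 lam) ε μ)
    (plan : Sig → Act) (hlt : ε none plan < μ none plan) (s : Sig) (a : Act) :
    ∑ θ, lam θ * μ (some θ) s * u2 s a θ ≤ ∑ θ, lam θ * μ (some θ) s * u2 s (plan s) θ := by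
  classical
  have hsum : ∀ q, ∑ x, μ q x = 1 := fun q => (heq.1 q).1
  have hb := eps_best (sigU u1 u2 lam) ε μ heq hlt
    (Function.update plan s a : SigStrat Θ Sig Act none)
  rw [expPay_recv_prod u1 u2 lam (Function.update plan s a) μ hsum,
      expPay_recv_prod u1 u2 lam plan μ hsum] at hb
  rw [← Finset.add_sum_erase Finset.univ _ (Finset.mem_univ s),
      ← Finset.add_sum_erase Finset.univ _ (Finset.mem_univ s)] at hb
  have herase : ∀ x ∈ Finset.univ.erase s,
      (∑ θ, lam θ * μ (some θ) x * u2 x (Function.update plan s a x) θ)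
        = ∑ θ, lam θ * μ (some θ) x * u2 x (plan x) θ := by
    intro x hx
    rw [Function.update_of_ne (Finset.mem_erase.1 hx).1]
  rw [Finset.sum_congr rfl herase] at hb
  rw [Function.update_self s a plan] at hb
  linarith

lemma key_ratio (u1 u2 : Sig → Act → Θ → ℝ) (lam : Θ → ℝ)
    (ε μ : ∀ q : Option Θ, SigStrat Θ Sig Act q → ℝ)
    (heq : IsEpsEquilibrium (sigU u1 u2 lam) ε μ)
    (hεpos : ∀ q x, 0 < ε q x)
    (s : Sig) (θ θ' : Θ) (hTC : TypeCompat u1 s θ θ')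
    (hεle : ε (some θ') s ≤ ε (some θ) s) :
    μ (some θ') s * (1 - ∑ x ∈ Finset.univ.erase s, ε (some θ) x) ≤ μ (some θ) s := by
  classical
  have hsum : ∀ q, ∑ x, μ q x = 1 := fun q => (heq.1 q).1
  have hgeq : ∀ q x, ε q x ≤ μ q x := fun q x => (heq.1 q).2 x
  have hposμ : ∀ q x, 0 < μ q x := fun q x => lt_of_lt_of_le (hεpos q x) (hgeq q x)
  set σ2 : Sig → Act → ℝ :=
    fun x a => ∑ c : Sig → Act, if c x = a then μ none c else 0 with hσ2
  have hsend : ∀ (θ'' : Θ) (x : Sig),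
      expPay (sigU u1 u2 lam) (some θ'') x (prodMix μ) = behPay u1 x σ2 θ'' := by
    intro θ'' x
    rw [hσ2]
    exact expPay_sender_prod u1 u2 lam θ'' x μ hsum
  have hμle1 : ∀ q x, μ q x ≤ 1 := by
    intro q x
    rw [← hsum q]
    exact Finset.single_le_sum (fun y _ => (hposμ q y).le) (Finset.mem_univ x)
  have hEnn : 0 ≤ ∑ x ∈ Finset.univ.erase s, ε (some θ) x :=
    Finset.sum_nonneg (fun x _ => (hεpos (some θ) x).le)
  by_cases hbW : ∀ s' : Sig, s' ≠ s → behPay u1 s' σ2 θ' ≤ behPay u1 s σ2 θ'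
  · have hσ2pos : ∀ x a, 0 < σ2 x a := by
      intro x a
      rw [hσ2]
      have h0 := Finset.single_le_sum
        (f := fun c : Sig → Act => if c x = a then μ none c else 0)
        (fun c _ => by
          show (0:ℝ) ≤ if c x = a then μ none c else 0
          split_ifs
          exacts [(hposμ none c).le, le_rfl])
        (Finset.mem_univ (fun _ => a : Sig → Act))
      have h0' : (if (fun _ : Sig => a) x = a then μ none (fun _ => a : Sig → Act) else 0)
          ≤ ∑ c : Sig → Act, if c x = a then μ none c else 0 := h0
      rw [if_pos (show (fun _ : Sig => a) x = a from rfl)] at h0'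
      exact lt_of_lt_of_le (hposμ none (fun _ => a : Sig → Act)) h0'
    have hσ2sum : ∀ x, ∑ a, σ2 x a = 1 := by
      intro x
      rw [hσ2]
      rw [Finset.sum_comm]
      trans (∑ c : Sig → Act, μ none c)
      · refine Finset.sum_congr rfl fun c _ => ?_
        rw [Finset.sum_ite_eq Finset.univ (c x) (fun _ => μ none c)]
        simp
      · exact hsum none
    have hstrict := hTC σ2 hσ2pos hσ2sum hbW
    have hmin : ∀ x : Sig, x ≠ s → μ (some θ) x = ε (some θ) x := by
      intro x hx
      refine eps_min (sigU u1 u2 lam) ε μ heq (si' := (s : SigStrat Θ Sig Act (some θ))) ?_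
      rw [hsend θ x, hsend θ s]
      exact hstrict x hx
    have hμs : μ (some θ) s = 1 - ∑ x ∈ Finset.univ.erase s, ε (some θ) x := by
      have h1 := Finset.add_sum_erase (Finset.univ : Finset Sig) (fun x : Sig => μ (some θ) x)
        (Finset.mem_univ s)
      have hs : ∑ x : Sig, μ (some θ) x = 1 := hsum (some θ)
      replace h1 := h1.trans hs
      have h2 : ∑ x ∈ (Finset.univ : Finset Sig).erase s, μ (some θ) x
          = ∑ x ∈ (Finset.univ : Finset Sig).erase s, ε (some θ) x :=
        Finset.sum_congr rfl (fun x hx => hmin x (Finset.mem_erase.1 hx).1)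
      have h3 : μ (some θ) s + ∑ x ∈ (Finset.univ : Finset Sig).erase s, ε (some θ) x = 1 := by
        rw [← h2]; exact h1
      exact eq_sub_of_add_eq h3
    have hbE : (0:ℝ) ≤ 1 - ∑ x ∈ Finset.univ.erase s, ε (some θ) x := by
      have := hposμ (some θ) s
      linarith
    rw [hμs]
    exact mul_le_of_le_one_left hbE (hμle1 (some θ') s)
  · push_neg at hbW
    obtain ⟨s', hs', hlt'⟩ := hbW
    have hmin : μ (some θ') s = ε (some θ') s := by
      refine eps_min (sigU u1 u2 lam) ε μ heq (si' := (s' : SigStrat Θ Sig Act (some θ'))) ?_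
      rw [hsend θ' s, hsend θ' s']
      exact hlt'
    calc μ (some θ') s * (1 - ∑ x ∈ Finset.univ.erase s, ε (some θ) x)
        ≤ μ (some θ') s * 1 :=
          mul_le_mul_of_nonneg_left (by linarith) (hposμ (some θ') s).le
      _ = μ (some θ') s := mul_one _
      _ = ε (some θ') s := hmin
      _ ≤ ε (some θ) s := hεle
      _ ≤ μ (some θ) s := hgeq (some θ) s


end PCEAuxSig

/-- In a signaling game, every PCE is a Nash equilibrium satisfying the compatibility
criterion: every receiver plan used with positive probability prescribes after each
signal `s` an action that best responds to a belief `p` with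
`p(θ)/p(θ') ≥ λ(θ)/λ(θ')` whenever `s` is more type-compatible with `θ` than `θ'`. -/
theorem pce_satisfies_compatibility_criterion
    (u1 u2 : Sig → Act → Θ → ℝ) (lam : Θ → ℝ)
    (hlam : ∀ θ, 0 < lam θ) (hlamsum : ∑ θ, lam θ = 1)
    (σstar : ∀ p : Option Θ, SigStrat Θ Sig Act p → ℝ)
    (hPCE : IsPCE (sigU u1 u2 lam) σstar) :
    IsNash (sigU u1 u2 lam) σstar ∧
    ∀ plan : Sig → Act, 0 < σstar none plan → ∀ s : Sig,
      ∃ p : Θ → ℝ, (∀ θ, 0 ≤ p θ) ∧ (∑ θ, p θ = 1) ∧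
        (∀ θ θ', TypeCompat u1 s θ θ' → p θ' * lam θ ≤ p θ * lam θ') ∧
        (∀ a : Act, ∑ θ, p θ * u2 s a θ ≤ ∑ θ, p θ * u2 s (plan s) θ) := by
  classical
  obtain ⟨ε, σs, hct, hε0, heq, hlim⟩ := hPCE
  have hsum1 : ∀ t i, ∑ x, σs t i x = 1 := fun t i => ((heq t).1 i).1
  have hge : ∀ t i x, ε t i x ≤ σs t i x := fun t i x => ((heq t).1 i).2 x
  have hpos : ∀ t i x, 0 < σs t i x := fun t i x =>
    lt_of_lt_of_le ((hct t).1 i x) (hge t i x)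
  have hstarsum : ∀ i, ∑ x, σstar i x = 1 := by
    intro i
    have h1 : Filter.Tendsto (fun t => ∑ x, σs t i x) Filter.atTop
        (nhds (∑ x, σstar i x)) := tendsto_finset_sum _ (fun x _ => hlim i x)
    have h2 : (fun t => ∑ x, σs t i x) = fun _ => (1:ℝ) := funext fun t => hsum1 t i
    rw [h2] at h1
    exact tendsto_nhds_unique h1 tendsto_const_nhds
  have hstarnn : ∀ i x, 0 ≤ σstar i x := fun i x =>
    ge_of_tendsto' (hlim i x) (fun t => (hpos t i x).le)
  have hNash : IsNash (sigU u1 u2 lam) σstar := by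
    refine ⟨fun i => ⟨hstarnn i, hstarsum i⟩, ?_⟩
    intro i τi hτ0 hτ1
    set τt : ℕ → SigStrat Θ Sig Act i → ℝ :=
      fun t x => ε t i x + (1 - ∑ y, ε t i y) * τi x with hτt
    have hεsum : ∀ t, ∑ y, ε t i y ≤ 1 := by
      intro t
      rw [← hsum1 t i]
      exact Finset.sum_le_sum (fun x _ => hge t i x)
    have htrem : ∀ t, InTrembleSet (ε t) i (τt t) := by
      intro t
      constructor
      · show ∑ x, (ε t i x + (1 - ∑ y, ε t i y) * τi x) = 1
        rw [Finset.sum_add_distrib, ← Finset.mul_sum, hτ1, mul_one]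
        ring
      · intro x
        show ε t i x ≤ ε t i x + (1 - ∑ y, ε t i y) * τi x
        have h3 : 0 ≤ (1 - ∑ y, ε t i y) * τi x :=
          mul_nonneg (by linarith [hεsum t]) (hτ0 x)
        linarith
    have hle : ∀ t, profPay (sigU u1 u2 lam) i (Function.update (σs t) i (τt t))
        ≤ profPay (sigU u1 u2 lam) i (σs t) := fun t => (heq t).2 i (τt t) (htrem t)
    have hLlim : Filter.Tendsto
        (fun t => profPay (sigU u1 u2 lam) i (Function.update (σs t) i (τt t)))
        Filter.atTop (nhds (profPay (sigU u1 u2 lam) i (Function.update σstar i τi))) := by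
      apply tendsto_profPay
      intro j x
      by_cases hj : j = i
      · subst hj
        simp only [Function.update_self]
        have h1 : Filter.Tendsto (fun t => ε t j x) Filter.atTop (nhds 0) := hε0 j x
        have h2 : Filter.Tendsto (fun t => ∑ y, ε t j y) Filter.atTop (nhds 0) := by
          have h3 := tendsto_finset_sum Finset.univ
            (fun y (_ : y ∈ Finset.univ) => hε0 j y)
          simpa using h3
        have h4 := h1.add
          (((tendsto_const_nhds (x := (1:ℝ))).sub h2).mul_const (τi x))
        simp only [hτt]
        simpa using h4
      · simp only [Function.update_of_ne hj]
        exact hlim j x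
    have hRlim := tendsto_profPay (sigU u1 u2 lam) i σs σstar (fun j x => hlim j x)
    exact le_of_tendsto_of_tendsto' hLlim hRlim hle
  refine ⟨hNash, ?_⟩
  intro plan hplan s
  set Dt : ℕ → ℝ := fun t => ∑ θ, lam θ * σs t (some θ) s with hDt
  have hΘ : Nonempty Θ := by
    by_contra hh
    rw [not_nonempty_iff] at hh
    rw [Finset.univ_eq_empty, Finset.sum_empty] at hlamsum
    exact zero_ne_one hlamsum
  have hDpos : ∀ t, 0 < Dt t := by
    intro t
    rw [hDt]
    exact Finset.sum_pos (fun θ _ => mul_pos (hlam θ) (hpos t (some θ) s))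
      Finset.univ_nonempty
  set pt : ℕ → Θ → ℝ := fun t θ => lam θ * σs t (some θ) s / Dt t with hpt
  have hptnn : ∀ t θ, 0 ≤ pt t θ := fun t θ =>
    div_nonneg (mul_pos (hlam θ) (hpos t (some θ) s)).le (hDpos t).le
  have hptle : ∀ t θ, pt t θ ≤ 1 := by
    intro t θ
    show lam θ * σs t (some θ) s / Dt t ≤ 1
    rw [div_le_one (hDpos t), hDt]
    exact Finset.single_le_sum
      (fun θ' _ => (mul_pos (hlam θ') (hpos t (some θ') s)).le) (Finset.mem_univ θ)
  have hptsum : ∀ t, ∑ θ, pt t θ = 1 := by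
    intro t
    show ∑ θ, lam θ * σs t (some θ) s / Dt t = 1
    rw [← Finset.sum_div]
    have h6 : (∑ θ, lam θ * σs t (some θ) s) = Dt t := rfl
    rw [h6]
    exact div_self (hDpos t).ne'
  have hmem : ∀ t, pt t ∈ Set.pi Set.univ (fun _ : Θ => Set.Icc (0:ℝ) 1) :=
    fun t θ _ => ⟨hptnn t θ, hptle t θ⟩
  obtain ⟨p, hpmem, φ, hφ, hconv⟩ :=
    (isCompact_univ_pi (fun _ : Θ => isCompact_Icc)).tendsto_subseq hmem
  have hφtop : Filter.Tendsto φ Filter.atTop Filter.atTop := hφ.tendsto_atTop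
  have hptw : ∀ θ, Filter.Tendsto (fun k => pt (φ k) θ) Filter.atTop (nhds (p θ)) :=
    fun θ => tendsto_pi_nhds.1 hconv θ
  refine ⟨p, fun θ => (hpmem θ (Set.mem_univ θ)).1, ?_, ?_, ?_⟩
  · have h1 : Filter.Tendsto (fun k => ∑ θ, pt (φ k) θ) Filter.atTop
        (nhds (∑ θ, p θ)) := tendsto_finset_sum _ (fun θ _ => hptw θ)
    have h2 : (fun k => ∑ θ, pt (φ k) θ) = fun _ => (1:ℝ) :=
      funext fun k => hptsum (φ k)
    rw [h2] at h1
    exact tendsto_nhds_unique h1 tendsto_const_nhds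
  · intro θ θ' hTC
    by_cases hθθ : θ = θ'
    · subst hθθ
      exact le_refl _
    · have hMC := typeCompat_moreCompatible u1 u2 lam s θ θ' hθθ hTC
      have hεle : ∀ t, ε t (some θ') s ≤ ε t (some θ) s := fun t =>
        (hct t).2 (some θ) (some θ') s s (by simpa using hθθ) hMC
      set Et : ℕ → ℝ := fun t => ∑ x ∈ Finset.univ.erase s, ε t (some θ) x with hEt
      have hkey : ∀ t, σs t (some θ') s * (1 - Et t) ≤ σs t (some θ) s := fun t =>
        key_ratio u1 u2 lam (ε t) (σs t) (heq t) ((hct t).1) s θ θ' hTC (hεle t)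
      have hElim : Filter.Tendsto (fun k => Et (φ k)) Filter.atTop (nhds 0) := by
        have h0 : Filter.Tendsto Et Filter.atTop (nhds 0) := by
          have h3 := tendsto_finset_sum (Finset.univ.erase s)
            (fun x (_ : x ∈ Finset.univ.erase s) => hε0 (some θ) x)
          rw [hEt]
          simpa using h3
        exact h0.comp hφtop
      have hper : ∀ k, pt (φ k) θ' * lam θ * (1 - Et (φ k)) ≤ pt (φ k) θ * lam θ' := by
        intro k
        have hk := hkey (φ k)
        have h2 : lam θ' * σs (φ k) (some θ') s * (1 - Et (φ k)) * lam θ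
            ≤ lam θ * σs (φ k) (some θ) s * lam θ' := by
          have h3 := mul_le_mul_of_nonneg_left hk (mul_pos (hlam θ) (hlam θ')).le
          linear_combination h3
        have e1 : pt (φ k) θ' * lam θ * (1 - Et (φ k))
            = lam θ' * σs (φ k) (some θ') s * (1 - Et (φ k)) * lam θ / Dt (φ k) := by
          simp only [hpt]
          ring
        have e2 : pt (φ k) θ * lam θ'
            = lam θ * σs (φ k) (some θ) s * lam θ' / Dt (φ k) := by
          simp only [hpt]
          ring
        rw [e1, e2]
        exact (div_le_div_iff_of_pos_right (hDpos (φ k))).2 h2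
      have hA : Filter.Tendsto (fun k => pt (φ k) θ' * lam θ * (1 - Et (φ k)))
          Filter.atTop (nhds (p θ' * lam θ * (1 - 0))) :=
        ((hptw θ').mul_const (lam θ)).mul (tendsto_const_nhds.sub hElim)
      have hB : Filter.Tendsto (fun k => pt (φ k) θ * lam θ')
          Filter.atTop (nhds (p θ * lam θ')) := (hptw θ).mul_const (lam θ')
      have h5 := le_of_tendsto_of_tendsto' hA hB hper
      simpa using h5
  · intro a
    have hev : ∀ᶠ t in Filter.atTop, ε t none plan < σs t none plan :=
      (hε0 none plan).eventually_lt (hlim none plan) hplan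
    have hevφ : ∀ᶠ k in Filter.atTop, ε (φ k) none plan < σs (φ k) none plan :=
      hφtop.eventually hev
    have hineq : ∀ᶠ k in Filter.atTop,
        (fun k => ∑ θ, pt (φ k) θ * u2 s a θ) k
          ≤ (fun k => ∑ θ, pt (φ k) θ * u2 s (plan s) θ) k := by
      filter_upwards [hevφ] with k hk
      have hrb := recv_best u1 u2 lam (ε (φ k)) (σs (φ k)) (heq (φ k)) plan hk s a
      have hdiv : ∀ b : Act, ∑ θ, pt (φ k) θ * u2 s b θ
          = (∑ θ, lam θ * σs (φ k) (some θ) s * u2 s b θ) / Dt (φ k) := by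
        intro b
        rw [Finset.sum_div]
        refine Finset.sum_congr rfl fun θ _ => ?_
        simp only [hpt]
        ring
      show ∑ θ, pt (φ k) θ * u2 s a θ ≤ ∑ θ, pt (φ k) θ * u2 s (plan s) θ
      rw [hdiv a, hdiv (plan s)]
      exact (div_le_div_iff_of_pos_right (hDpos (φ k))).2 hrb
    have hA : Filter.Tendsto (fun k => ∑ θ, pt (φ k) θ * u2 s a θ)
        Filter.atTop (nhds (∑ θ, p θ * u2 s a θ)) :=
      tendsto_finset_sum _ (fun θ _ => (hptw θ).mul_const _)
    have hB : Filter.Tendsto (fun k => ∑ θ, pt (φ k) θ * u2 s (plan s) θ)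
        Filter.atTop (nhds (∑ θ, p θ * u2 s (plan s) θ)) :=
      tendsto_finset_sum _ (fun θ _ => (hptw θ).mul_const _)
    exact le_of_tendsto_of_tendsto hA hB hineq

end Signaling

end
end
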